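/- arXiv:1705.01084 — 4 statements merged into one kernel-verified Lean document; each statement's English description precedes it below -/
import Mathlib

section
/- Let $K$ be a field and let $v_1, v_2$ be two independent nontrivial valuations on $K$, meaning that the subring of $K$ generated by their valuation rings $\mathcal{O}_{v_1}$ and $\mathcal{O}_{v_2}$ is all of $K$. Then every $x \in K^\times$ can be written as $x = u_1 \cdot u_2$ where $u_1 \in 1 + \mathfrak{m}_{v_1}$ and $u_2 \in 1 + \mathfrak{m}_{v_2}$, i.e. $K^\times = \mathrm{U}^1_{v_1} \cdot \mathrm{U}^1_{v_2}$. -/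
/-- From the closure hypothesis: every value of `v₁` is dominated by the `v₁`-value of some
`v₂`-integer. -/
lemma aux_dom {K : Type*} [Field K] {Γ₁ Γ₂ : Type*}
    [LinearOrderedCommGroupWithZero Γ₁] [LinearOrderedCommGroupWithZero Γ₂]
    (v₁ : Valuation K Γ₁) (v₂ : Valuation K Γ₂)
    (hind : Subring.closure ((v₁.integer : Set K) ∪ (v₂.integer : Set K)) = ⊤) :
    ∀ t : K, ∃ d : K, v₂ d ≤ 1 ∧ v₁ t ≤ v₁ d := by
  intro t
  have ht : t ∈ Subring.closure ((v₁.integer : Set K) ∪ (v₂.integer : Set K)) := by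
    rw [hind]; trivial
  induction ht using Subring.closure_induction with
  | mem x hx =>
    rcases hx with hx | hx
    · exact ⟨1, by simp, by rw [map_one]; exact hx⟩
    · exact ⟨x, hx, le_rfl⟩
  | zero => exact ⟨1, by simp, by simp⟩
  | one => exact ⟨1, by simp, by simp⟩
  | add x y hx hy ihx ihy =>
    obtain ⟨d₁, hd₁, hd₁'⟩ := ihx
    obtain ⟨d₂, hd₂, hd₂'⟩ := ihy
    rcases le_total (v₁ d₁) (v₁ d₂) with h | h
    · exact ⟨d₂, hd₂, v₁.map_add_le (le_trans hd₁' h) hd₂'⟩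
    · exact ⟨d₁, hd₁, v₁.map_add_le hd₁' (le_trans hd₂' h)⟩
  | neg x hx ihx =>
    obtain ⟨d, hd, hd'⟩ := ihx
    exact ⟨d, hd, by simpa using hd'⟩
  | mul x y hx hy ihx ihy =>
    obtain ⟨d₁, hd₁, hd₁'⟩ := ihx
    obtain ⟨d₂, hd₂, hd₂'⟩ := ihy
    exact ⟨d₁ * d₂, by rw [map_mul]; exact mul_le_one' hd₁ hd₂,
      by rw [map_mul, map_mul]; exact mul_le_mul' hd₁' hd₂'⟩

/-- "Quadrant" lemma: an element with `v₁` at most `v₁ b` and `v₂` at least `1`. -/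
lemma aux_quad {K : Type*} [Field K] {Γ₁ Γ₂ : Type*}
    [LinearOrderedCommGroupWithZero Γ₁] [LinearOrderedCommGroupWithZero Γ₂]
    (v₁ : Valuation K Γ₁) (v₂ : Valuation K Γ₂)
    (hind : Subring.closure ((v₁.integer : Set K) ∪ (v₂.integer : Set K)) = ⊤) :
    ∀ b : K, b ≠ 0 → ∃ z : K, z ≠ 0 ∧ v₁ z ≤ v₁ b ∧ 1 ≤ v₂ z := by
  intro b hb
  obtain ⟨d, hd2, hd1⟩ := aux_dom v₁ v₂ hind b⁻¹
  rw [map_inv₀] at hd1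
  have hvb : (0 : Γ₁) < v₁ b := zero_lt_iff.mpr (by simpa using hb)
  have hd0 : d ≠ 0 := by
    intro h; rw [h, map_zero] at hd1
    exact (inv_ne_zero (ne_of_gt hvb)) (le_antisymm hd1 (le_of_lt (inv_pos.mpr hvb)))
  have hvd : (0 : Γ₁) < v₁ d := zero_lt_iff.mpr (by simpa using hd0)
  have hvd2 : (0 : Γ₂) < v₂ d := zero_lt_iff.mpr (by simpa using hd0)
  refine ⟨d⁻¹, inv_ne_zero hd0, ?_, ?_⟩
  · rw [map_inv₀]
    have := inv_anti₀ (inv_pos.mpr hvb) hd1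
    simpa using this
  · rw [map_inv₀]
    exact (one_le_inv₀ hvd2).mpr hd2

/-- "Quadrant" lemma, other direction: an element with `v₁` at most `1` and `v₂` at least `v₂ c`. -/
lemma aux_quad2 {K : Type*} [Field K] {Γ₁ Γ₂ : Type*}
    [LinearOrderedCommGroupWithZero Γ₁] [LinearOrderedCommGroupWithZero Γ₂]
    (v₁ : Valuation K Γ₁) (v₂ : Valuation K Γ₂)
    (hind : Subring.closure ((v₁.integer : Set K) ∪ (v₂.integer : Set K)) = ⊤) :
    ∀ c : K, c ≠ 0 → ∃ w : K, w ≠ 0 ∧ v₁ w ≤ 1 ∧ v₂ c ≤ v₂ w := by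
  intro c hc
  have hind' : Subring.closure ((v₂.integer : Set K) ∪ (v₁.integer : Set K)) = ⊤ := by
    rwa [Set.union_comm]
  obtain ⟨d, hd1, hd2⟩ := aux_dom v₂ v₁ hind' c
  have hvc : (0 : Γ₂) < v₂ c := zero_lt_iff.mpr (by simpa using hc)
  have hd0 : d ≠ 0 := by
    intro h; rw [h, map_zero] at hd2
    exact (ne_of_gt hvc) (le_antisymm hd2 (le_of_lt hvc))
  exact ⟨d, hd0, hd1, hd2⟩

/-- The main quadrant lemma with strict inequalities. -/
lemma aux_strict {K : Type*} [Field K] {Γ₁ Γ₂ : Type*}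
    [LinearOrderedCommGroupWithZero Γ₁] [LinearOrderedCommGroupWithZero Γ₂]
    (v₁ : Valuation K Γ₁) (v₂ : Valuation K Γ₂)
    (hnt₁ : ∃ z : K, z ≠ 0 ∧ v₁ z ≠ 1) (hnt₂ : ∃ z : K, z ≠ 0 ∧ v₂ z ≠ 1)
    (hind : Subring.closure ((v₁.integer : Set K) ∪ (v₂.integer : Set K)) = ⊤) :
    ∀ b c : K, b ≠ 0 → c ≠ 0 → ∃ a : K, a ≠ 0 ∧ v₁ a < v₁ b ∧ v₂ c < v₂ a := by
  have hind' : Subring.closure ((v₂.integer : Set K) ∪ (v₁.integer : Set K)) = ⊤ := by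
    rwa [Set.union_comm]
  -- element with v₁ < 1
  obtain ⟨z₁, hz₁0, hz₁⟩ := hnt₁
  obtain ⟨z₂, hz₂0, hz₂⟩ := hnt₂
  have hv₁ : ∃ t : K, t ≠ 0 ∧ v₁ t < 1 := by
    rcases lt_or_gt_of_ne hz₁ with h | h
    · exact ⟨z₁, hz₁0, h⟩
    · refine ⟨z₁⁻¹, inv_ne_zero hz₁0, ?_⟩
      rw [map_inv₀]
      exact inv_lt_one_of_one_lt₀ h
  have hv₂ : ∃ t : K, t ≠ 0 ∧ v₂ t < 1 := by
    rcases lt_or_gt_of_ne hz₂ with h | h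
    · exact ⟨z₂, hz₂0, h⟩
    · refine ⟨z₂⁻¹, inv_ne_zero hz₂0, ?_⟩
      rw [map_inv₀]
      exact inv_lt_one_of_one_lt₀ h
  obtain ⟨t₁, ht₁0, ht₁⟩ := hv₁
  obtain ⟨t₂, ht₂0, ht₂⟩ := hv₂
  -- strict element a₀ : v₁ a₀ < 1 < v₂ a₀
  obtain ⟨z, hz0, hz1, hz2⟩ := aux_quad v₁ v₂ hind t₁ ht₁0
  obtain ⟨w, hw0, hw1, hw2⟩ := aux_quad2 v₁ v₂ hind t₂⁻¹ (inv_ne_zero ht₂0)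
  have hvt₂ : (0 : Γ₂) < v₂ t₂ := zero_lt_iff.mpr (by simpa using ht₂0)
  have hw2' : 1 < v₂ w := by
    rw [map_inv₀] at hw2
    exact lt_of_lt_of_le ((one_lt_inv₀ hvt₂).mpr ht₂) hw2
  set a₀ := z * w with ha₀
  have ha₀0 : a₀ ≠ 0 := mul_ne_zero hz0 hw0
  have hvz : (0 : Γ₁) < v₁ z := zero_lt_iff.mpr (by simpa using hz0)
  have ha₀1 : v₁ a₀ < 1 := by
    rw [ha₀, map_mul]
    calc v₁ z * v₁ w ≤ v₁ z * 1 := mul_le_mul' le_rfl hw1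
    _ = v₁ z := mul_one _
    _ ≤ v₁ t₁ := hz1
    _ < 1 := ht₁
  have hvw2 : (0 : Γ₂) < v₂ w := zero_lt_iff.mpr (by simpa using hw0)
  have ha₀2 : 1 < v₂ a₀ := by
    rw [ha₀, map_mul]
    calc (1 : Γ₂) < v₂ w := hw2'
    _ = 1 * v₂ w := (one_mul _).symm
    _ ≤ v₂ z * v₂ w := mul_le_mul' hz2 le_rfl
  -- now the general statement
  intro b c hb hc
  obtain ⟨z', hz'0, hz'1, hz'2⟩ := aux_quad v₁ v₂ hind b hb
  obtain ⟨w', hw'0, hw'1, hw'2⟩ := aux_quad2 v₁ v₂ hind c hc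
  refine ⟨z' * w' * a₀, mul_ne_zero (mul_ne_zero hz'0 hw'0) ha₀0, ?_, ?_⟩
  · have hvb : (0 : Γ₁) < v₁ b := zero_lt_iff.mpr (by simpa using hb)
    rw [map_mul, map_mul]
    calc v₁ z' * v₁ w' * v₁ a₀ ≤ v₁ b * 1 * v₁ a₀ :=
        mul_le_mul' (mul_le_mul' hz'1 hw'1) le_rfl
    _ = v₁ b * v₁ a₀ := by rw [mul_one]
    _ < v₁ b * 1 := mul_lt_mul_of_pos_left ha₀1 hvb
    _ = v₁ b := mul_one _
  · have hvc : (0 : Γ₂) < v₂ c := zero_lt_iff.mpr (by simpa using hc)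
    rw [map_mul, map_mul]
    calc v₂ c = v₂ c * 1 := (mul_one _).symm
    _ < v₂ c * v₂ a₀ := mul_lt_mul_of_pos_left ha₀2 hvc
    _ ≤ v₂ w' * v₂ a₀ := mul_le_mul' hw'2 le_rfl
    _ = 1 * v₂ w' * v₂ a₀ := by rw [one_mul]
    _ ≤ v₂ z' * v₂ w' * v₂ a₀ := mul_le_mul' (mul_le_mul' hz'2 le_rfl) le_rfl

/-- Approximation for independent nontrivial valuations:
`K^× = U¹_{v₁} · U¹_{v₂}`. -/
theorem stmt11 (K : Type*) [Field K] (Γ₁ Γ₂ : Type*)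
    [LinearOrderedCommGroupWithZero Γ₁] [LinearOrderedCommGroupWithZero Γ₂]
    (v₁ : Valuation K Γ₁) (v₂ : Valuation K Γ₂)
    (hnt₁ : ∃ z : K, z ≠ 0 ∧ v₁ z ≠ 1) (hnt₂ : ∃ z : K, z ≠ 0 ∧ v₂ z ≠ 1)
    (hind : Subring.closure ((v₁.integer : Set K) ∪ (v₂.integer : Set K)) = ⊤) :
    ∀ x : K, x ≠ 0 → ∃ u₁ u₂ : K,
      v₁ (u₁ - 1) < 1 ∧ v₂ (u₂ - 1) < 1 ∧ x = u₁ * u₂ := by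
  intro x hx
  by_cases hx1 : x = 1
  · exact ⟨1, 1, by simp, by simp, by simp [hx1]⟩
  have he : x - 1 ≠ 0 := sub_ne_zero.mpr hx1
  set e := x - 1 with hedef
  -- choose the targets
  set b : K := if v₁ e ≤ 1 then 1 else e⁻¹ with hbdef
  have hb0 : b ≠ 0 := by
    rw [hbdef]; split <;> simp [he]
  set c : K := if 1 ≤ v₂ e then e / x else x⁻¹ with hcdef
  have hc0 : c ≠ 0 := by
    rw [hcdef]; split
    · exact div_ne_zero he hx
    · exact inv_ne_zero hx
  obtain ⟨a, ha0, hab, hac⟩ := aux_strict v₁ v₂ hnt₁ hnt₂ hind b c hb0 hc0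
  have hve : (0 : Γ₁) < v₁ e := zero_lt_iff.mpr (by simpa using he)
  have hve2 : (0 : Γ₂) < v₂ e := zero_lt_iff.mpr (by simpa using he)
  have hvx2 : (0 : Γ₂) < v₂ x := zero_lt_iff.mpr (by simpa using hx)
  -- v₁ a < 1 and v₁ e * v₁ a < 1
  have ha1 : v₁ a < 1 := by
    rcases le_or_gt (v₁ e) 1 with h | h
    · have : b = 1 := by rw [hbdef, if_pos h]
      rw [this] at hab; simpa using hab
    · have : b = e⁻¹ := by rw [hbdef, if_neg (not_le.mpr h)]
      rw [this, map_inv₀] at hab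
      exact lt_trans hab (inv_lt_one_of_one_lt₀ h)
  have hea : v₁ e * v₁ a < 1 := by
    rcases le_or_gt (v₁ e) 1 with h | h
    · calc v₁ e * v₁ a ≤ 1 * v₁ a := mul_le_mul' h le_rfl
      _ = v₁ a := one_mul _
      _ < 1 := ha1
    · have : b = e⁻¹ := by rw [hbdef, if_neg (not_le.mpr h)]
      rw [this, map_inv₀] at hab
      calc v₁ e * v₁ a < v₁ e * (v₁ e)⁻¹ :=
        mul_lt_mul_of_pos_left hab hve
      _ = 1 := mul_inv_cancel₀ (ne_of_gt hve)
  -- v₂ (x*a) > 1 and > v₂ e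
  have hxa1 : 1 < v₂ (x * a) := by
    rw [map_mul]
    rcases le_or_gt 1 (v₂ e) with h | h
    · have : c = e / x := by rw [hcdef, if_pos h]
      rw [this, map_div₀] at hac
      have := mul_lt_mul_of_pos_left hac hvx2
      rw [mul_div_cancel₀ _ (ne_of_gt hvx2)] at this
      exact lt_of_le_of_lt h this
    · have : c = x⁻¹ := by rw [hcdef, if_neg (not_le.mpr h)]
      rw [this, map_inv₀] at hac
      have := mul_lt_mul_of_pos_left hac hvx2
      rwa [mul_inv_cancel₀ (ne_of_gt hvx2)] at this
  have hxae : v₂ e < v₂ (x * a) := by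
    rw [map_mul]
    rcases le_or_gt 1 (v₂ e) with h | h
    · have : c = e / x := by rw [hcdef, if_pos h]
      rw [this, map_div₀] at hac
      have := mul_lt_mul_of_pos_left hac hvx2
      rwa [mul_div_cancel₀ _ (ne_of_gt hvx2)] at this
    · rw [← map_mul]; exact lt_trans h hxa1
  -- denominators
  have hden₁ : v₁ (1 + a) = 1 := v₁.map_one_add_of_lt ha1
  have hd₁0 : (1 : K) + a ≠ 0 := by
    intro h
    rw [h, map_zero] at hden₁
    exact zero_ne_one hden₁
  have hden₂ : v₂ (1 + x * a) = v₂ (x * a) := by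
    rw [add_comm]
    exact v₂.map_add_eq_of_lt_left (by simpa using hxa1)
  have hd₂0 : (1 : K) + x * a ≠ 0 := by
    intro h
    rw [h, map_zero] at hden₂
    exact absurd hden₂.symm (ne_of_gt (lt_trans zero_lt_one hxa1))
  refine ⟨(1 + x * a) / (1 + a), x * (1 + a) / (1 + x * a), ?_, ?_, ?_⟩
  · have : (1 + x * a) / (1 + a) - 1 = e * a / (1 + a) := by
      field_simp [hedef]
      ring
    rw [this, map_div₀, hden₁, div_one, map_mul]
    exact hea
  · have : x * (1 + a) / (1 + x * a) - 1 = e / (1 + x * a) := by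
      field_simp [hedef]
      ring
    rw [this, map_div₀, hden₂]
    rw [div_lt_iff₀ (lt_trans zero_lt_one hxa1), one_mul]
    exact hxae
  · field_simp
end

section
/- Let $K$ be a field and $v_1, v_2$ two independent nontrivial valuations on $K$ (the subring generated by $\mathcal{O}_{v_1}$ and $\mathcal{O}_{v_2}$ equals $K$). If $g : K^\times \to \mathbb{Q}$ is a group homomorphism vanishing on $1 + \mathfrak{m}_{v_1}$ and on $1 + \mathfrak{m}_{v_2}$ (more precisely, on the nonzero elements of these sets), then $g = 0$. -/
/-- From independence: every element's `v₁`-value is dominated by the `v₁`-value of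
some `v₂`-integer. -/
lemma aux_bounded_rep {K : Type*} [Field K] {Γ₁ Γ₂ : Type*}
    [LinearOrderedCommGroupWithZero Γ₁] [LinearOrderedCommGroupWithZero Γ₂]
    (v₁ : Valuation K Γ₁) (v₂ : Valuation K Γ₂)
    (hind : Subring.closure ((v₁.integer : Set K) ∪ (v₂.integer : Set K)) = ⊤) :
    ∀ z : K, ∃ b : K, v₂ b ≤ 1 ∧ v₁ z ≤ v₁ b := by
  intro z
  have hz : z ∈ Subring.closure ((v₁.integer : Set K) ∪ (v₂.integer : Set K)) := by
    rw [hind]; trivial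
  induction hz using Subring.closure_induction with
  | mem x hx =>
    rcases hx with hx | hx
    · exact ⟨1, by simp, by simpa [Valuation.map_one] using (show v₁ x ≤ 1 from hx)⟩
    · exact ⟨x, hx, le_rfl⟩
  | zero => exact ⟨1, by simp, by simp⟩
  | one => exact ⟨1, by simp, by simp⟩
  | add x y hx hy ihx ihy =>
    obtain ⟨b, hb2, hb1⟩ := ihx
    obtain ⟨c, hc2, hc1⟩ := ihy
    rcases le_total (v₁ b) (v₁ c) with h | h
    · exact ⟨c, hc2, v₁.map_add_le (le_trans hb1 h) hc1⟩
    · exact ⟨b, hb2, v₁.map_add_le hb1 (le_trans hc1 h)⟩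
  | neg x hx ihx => simpa using ihx
  | mul x y hx hy ihx ihy =>
    obtain ⟨b, hb2, hb1⟩ := ihx
    obtain ⟨c, hc2, hc1⟩ := ihy
    exact ⟨b * c, by simpa using mul_le_one' hb2 hc2,
      by rw [v₁.map_mul, v₁.map_mul]; exact mul_le_mul' hb1 hc1⟩

/-- From independence and nontriviality of `v₁`: there is a `v₂`-integer with `v₁`-value
strictly above any prescribed attained value. -/
lemma aux_big {K : Type*} [Field K] {Γ₁ Γ₂ : Type*}
    [LinearOrderedCommGroupWithZero Γ₁] [LinearOrderedCommGroupWithZero Γ₂]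
    (v₁ : Valuation K Γ₁) (v₂ : Valuation K Γ₂)
    (hnt₁ : ∃ z : K, z ≠ 0 ∧ v₁ z ≠ 1)
    (hind : Subring.closure ((v₁.integer : Set K) ∪ (v₂.integer : Set K)) = ⊤)
    (w : K) (hw : w ≠ 0) :
    ∃ b : K, v₂ b ≤ 1 ∧ v₁ w < v₁ b := by
  obtain ⟨z, hz0, hz1⟩ := hnt₁
  have hzne : v₁ z ≠ 0 := by simpa [Valuation.zero_iff] using hz0
  obtain ⟨t, ht⟩ : ∃ t : K, 1 < v₁ t := by
    rcases lt_or_gt_of_ne hz1 with h | h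
    · refine ⟨z⁻¹, ?_⟩
      rw [map_inv₀]
      exact (one_lt_inv₀ (zero_lt_iff.mpr hzne)).mpr h
    · exact ⟨z, h⟩
  have hwne : v₁ w ≠ 0 := by simpa [Valuation.zero_iff] using hw
  obtain ⟨b, hb2, hb1⟩ := aux_bounded_rep v₁ v₂ hind (t * w)
  refine ⟨b, hb2, lt_of_lt_of_le ?_ hb1⟩
  rw [v₁.map_mul]
  exact lt_mul_of_one_lt_left (zero_lt_iff.mpr hwne) ht

/-- A homomorphism `K^× → ℚ` vanishing on the principal units of two independent
nontrivial valuations vanishes identically. -/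
theorem stmt12 (K : Type*) [Field K] (Γ₁ Γ₂ : Type*)
    [LinearOrderedCommGroupWithZero Γ₁] [LinearOrderedCommGroupWithZero Γ₂]
    (v₁ : Valuation K Γ₁) (v₂ : Valuation K Γ₂)
    (hnt₁ : ∃ z : K, z ≠ 0 ∧ v₁ z ≠ 1) (hnt₂ : ∃ z : K, z ≠ 0 ∧ v₂ z ≠ 1)
    (hind : Subring.closure ((v₁.integer : Set K) ∪ (v₂.integer : Set K)) = ⊤)
    (g : Kˣ → ℚ) (hg : ∀ a b : Kˣ, g (a * b) = g a + g b)
    (hg₁ : ∀ u : Kˣ, v₁ ((u : K) - 1) < 1 → g u = 0)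
    (hg₂ : ∀ u : Kˣ, v₂ ((u : K) - 1) < 1 → g u = 0) :
    ∀ u : Kˣ, g u = 0 := by
  intro u
  set x : K := (u : K) with hx
  have hx0 : x ≠ 0 := Units.ne_zero u
  by_cases hx1 : x = 1
  · exact hg₁ u (by rw [← hx, hx1]; simp)
  have hxm1 : x - 1 ≠ 0 := sub_ne_zero.mpr hx1
  have hind' : Subring.closure ((v₂.integer : Set K) ∪ (v₁.integer : Set K)) = ⊤ := by
    rwa [Set.union_comm]
  have hv₁x : v₁ x ≠ 0 := by simpa [Valuation.zero_iff] using hx0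
  have hv₂xm1 : v₂ (x - 1) ≠ 0 := by simpa [Valuation.zero_iff] using hxm1
  -- w₁ realises max (1, v₁ ((x-1)/x))
  obtain ⟨w₁, hw₁0, hw₁⟩ : ∃ w : K, w ≠ 0 ∧ v₁ w = max 1 (v₁ ((x - 1) / x)) := by
    rcases le_total (v₁ ((x - 1) / x)) 1 with h | h
    · exact ⟨1, one_ne_zero, by rw [Valuation.map_one, max_eq_left h]⟩
    · exact ⟨(x - 1) / x, div_ne_zero hxm1 hx0, (max_eq_right h).symm⟩
  obtain ⟨b, hb2, hb1⟩ := aux_big v₁ v₂ hnt₁ hind w₁ hw₁0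
  rw [hw₁] at hb1
  -- w₂ realises max (1, v₂ (x-1))
  obtain ⟨w₂, hw₂0, hw₂⟩ : ∃ w : K, w ≠ 0 ∧ v₂ w = max 1 (v₂ (x - 1)) := by
    rcases le_total (v₂ (x - 1)) 1 with h | h
    · exact ⟨1, one_ne_zero, by rw [Valuation.map_one, max_eq_left h]⟩
    · exact ⟨x - 1, hxm1, (max_eq_right h).symm⟩
  obtain ⟨a, ha1, ha2⟩ := aux_big v₂ v₁ hnt₂ hind' w₂ hw₂0
  rw [hw₂] at ha2
  have ha0 : a ≠ 0 := by
    intro h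
    rw [h, Valuation.map_zero] at ha2
    exact absurd ha2 (by simp)
  have hb0 : b ≠ 0 := by
    intro h
    rw [h, Valuation.map_zero] at hb1
    exact absurd hb1 (by simp)
  have hv₂a0 : v₂ a ≠ 0 := by simpa [Valuation.zero_iff] using ha0
  have hv₁a0 : v₁ a ≠ 0 := by simpa [Valuation.zero_iff] using ha0
  set e : K := b / a with he
  have he0 : e ≠ 0 := div_ne_zero hb0 ha0
  have hba : v₁ b ≤ v₁ e := by
    rw [he, v₁.map_div, le_div_iff₀ (zero_lt_iff.mpr hv₁a0)]
    exact le_trans (mul_le_mul' le_rfl ha1) (mul_one _).le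
  have hv₁e : max 1 (v₁ ((x - 1) / x)) < v₁ e := lt_of_lt_of_le hb1 hba
  have hv₁e1 : 1 < v₁ e := lt_of_le_of_lt (le_max_left _ _) hv₁e
  have hv₂e : v₂ e ≤ (v₂ a)⁻¹ := by
    rw [he, v₂.map_div, div_eq_mul_inv]
    exact le_trans (mul_le_mul' hb2 le_rfl) (one_mul _).le
  have hv₂e1 : v₂ e < 1 := by
    refine lt_of_le_of_lt hv₂e ?_
    rw [inv_lt_one₀ (zero_lt_iff.mpr hv₂a0)]
    exact lt_of_le_of_lt (le_max_left _ _) ha2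
  have hv₂exm1 : v₂ e * v₂ (x - 1) < 1 := by
    refine lt_of_le_of_lt (mul_le_mul' hv₂e le_rfl) ?_
    rw [inv_mul_lt_one₀ (zero_lt_iff.mpr hv₂a0)]
    exact lt_of_le_of_lt (le_max_right _ _) ha2
  have hv₁e1' : v₁ (e + 1) = v₁ e := by
    have := v₁.map_add_eq_of_lt_left (x := e) (y := 1) (by simpa using hv₁e1)
    simpa using this
  have hv₂e1' : v₂ (e + 1) = 1 := by
    have := v₂.map_add_eq_of_lt_right (x := e) (y := 1) (by simpa using hv₂e1)
    simpa using this
  have hep1 : e + 1 ≠ 0 := by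
    intro h
    rw [h, Valuation.map_zero] at hv₂e1'
    simp at hv₂e1'
  set y : K := (x * e + 1) / (e + 1) with hy
  have hyx : y - x = (1 - x) / (e + 1) := by
    rw [eq_div_iff hep1, hy, sub_mul, div_mul_cancel₀ _ hep1]
    ring
  have hy1 : y - 1 = e * (x - 1) / (e + 1) := by
    rw [eq_div_iff hep1, hy, sub_mul, div_mul_cancel₀ _ hep1]
    ring
  have h1 : v₁ (x - 1) < v₁ e * v₁ x := by
    have h2 : v₁ ((x - 1) / x) < v₁ e := lt_of_le_of_lt (le_max_right _ _) hv₁e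
    rwa [v₁.map_div, div_lt_iff₀ (zero_lt_iff.mpr hv₁x)] at h2
  have hv₁yx : v₁ (y - x) < v₁ x := by
    rw [hyx, v₁.map_div, hv₁e1', div_lt_iff₀ (zero_lt_one.trans hv₁e1)]
    calc v₁ (1 - x) = v₁ (x - 1) := by
          rw [show (1 : K) - x = -(x - 1) by ring, Valuation.map_neg]
      _ < v₁ e * v₁ x := h1
      _ = v₁ x * v₁ e := mul_comm _ _
  have hv₂y1 : v₂ (y - 1) < 1 := by
    rw [hy1, v₂.map_div, hv₂e1', div_one, v₂.map_mul]
    exact hv₂exm1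
  have hy0 : y ≠ 0 := by
    intro h
    rw [h, zero_sub, Valuation.map_neg] at hv₁yx
    exact lt_irrefl _ hv₁yx
  set u₂ : Kˣ := Units.mk0 y hy0 with hu₂
  set u₁ : Kˣ := u * u₂⁻¹ with hu₁
  have hsplit : u = u₁ * u₂ := by
    rw [hu₁, inv_mul_cancel_right]
  have hgu₂ : g u₂ = 0 := hg₂ u₂ (by simpa [hu₂] using hv₂y1)
  have hgu₁ : g u₁ = 0 := by
    refine hg₁ u₁ ?_
    have hval : ((u₁ : K) - 1) = (x - y) / y := by
      rw [hu₁]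
      push_cast
      rw [hu₂]
      field_simp [← hx]
      rw [Units.val_mk0, ← hx, div_sub_one hy0, div_mul_cancel₀ _ hy0]
    have hv₁y : v₁ y = v₁ x := by
      have : v₁ (y - x + x) = v₁ x := v₁.map_add_eq_of_lt_right hv₁yx
      simpa using this
    rw [hval, v₁.map_div, hv₁y, div_lt_iff₀ (zero_lt_iff.mpr hv₁x), one_mul]
    calc v₁ (x - y) = v₁ (y - x) := by
          rw [show x - y = -(y - x) by ring, Valuation.map_neg]
      _ < v₁ x := hv₁yx
  rw [hsplit, hg, hgu₁, hgu₂]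
  norm_num
end

section
/- Let $K$ be a field, $v$ a valuation on $K$ with unit group $\mathrm{U}_v$ and maximal ideal $\mathfrak{m}_v$, and let $f, g : K^\times \to \mathbb{Q}$ be group homomorphisms satisfying: (i) $f$ vanishes on $\mathrm{U}_v$; (ii) for every $a \in K^\times$ with $1 + a \neq 0$, one has $f(a) \cdot g(1+a) = f(1+a) \cdot g(a)$; (iii) for every $x \in K^\times$ with $v(x) > 0$, either $f(x) \neq 0$ or there exists $y \in K^\times$ with $0 < v(y) < v(x)$ and $f(y) \neq 0$. Then $g$ vanishes on all principal units: $g(1 + x) = 0$ for every $x$ with $v(x) > 0$. -/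
/-- If `f` vanishes on `U_v`, `(f, g)` satisfy the acl-pair determinant relation on
`(a, 1 + a)`, and `v` is the coarsest valuation with `f` trivial on its units, then
`g` vanishes on all principal units of `v`. -/
theorem stmt14 (K : Type*) [Field K] (Γ₀ : Type*) [LinearOrderedCommGroupWithZero Γ₀]
    (v : Valuation K Γ₀) (f g : Kˣ → ℚ)
    (hf : ∀ a b : Kˣ, f (a * b) = f a + f b)
    (hg : ∀ a b : Kˣ, g (a * b) = g a + g b)
    (hfU : ∀ u : Kˣ, v (u : K) = 1 → f u = 0)
    (hfg : ∀ a b : Kˣ, (b : K) = 1 + (a : K) → f a * g b = f b * g a)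
    (hcoarse : ∀ x : Kˣ, v (x : K) < 1 →
      f x ≠ 0 ∨ ∃ y : Kˣ, v (x : K) < v (y : K) ∧ v (y : K) < 1 ∧ f y ≠ 0) :
    ∀ x u : Kˣ, v (x : K) < 1 → (u : K) = 1 + (x : K) → g u = 0 := by
  intro x u hx hu
  have hvu : v (u : K) = 1 := by rw [hu]; exact v.map_one_add_of_lt hx
  have hfu : f u = 0 := hfU u hvu
  rcases hcoarse x hx with hfx | ⟨y, hxy, hy, hfy⟩
  · have h := hfg x u hu
    rw [hfu, zero_mul] at h
    exact (mul_eq_zero.mp h).resolve_left hfx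
  · have hvy1 : v (1 + (y : K)) = 1 := v.map_one_add_of_lt hy
    have hwne : (1 + (y : K)) ≠ 0 := by
      intro h; rw [h, map_zero] at hvy1; exact zero_ne_one hvy1
    set w : Kˣ := Units.mk0 _ hwne with hw
    have hwK : (w : K) = 1 + (y : K) := rfl
    have hfw : f w = 0 := hfU w hvy1
    have hgw : g w = 0 := by
      have h := hfg y w hwK
      rw [hfw, zero_mul] at h
      exact (mul_eq_zero.mp h.symm.symm).resolve_left hfy
    have hvyne : v (y : K) ≠ 0 := by
      simp [Valuation.ne_zero_iff]
    have hvxw : v ((x : K) * w) = v x := by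
      rw [map_mul, hwK, hvy1, mul_one]
    have hvz : v ((y : K) + (x : K) * w) = v y := by
      rw [v.map_add_eq_of_lt_left (by rw [hvxw]; exact hxy)]
    have hzne : ((y : K) + (x : K) * w) ≠ 0 := by
      intro h; rw [h, map_zero] at hvz; exact hvyne hvz.symm
    set z : Kˣ := Units.mk0 _ hzne with hz
    have hzK : (z : K) = (y : K) + (x : K) * w := rfl
    -- f z = f y
    have hfzy : f z = f y := by
      have htK : ((z * y⁻¹ : Kˣ) : K) = 1 + (x : K) * w * (y : K)⁻¹ := by
        push_cast [hzK]
        field_simp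
      have hvt : v ((z * y⁻¹ : Kˣ) : K) = 1 := by
        rw [htK]
        apply v.map_one_add_of_lt
        rw [map_mul, hvxw, map_inv₀]
        rw [mul_comm]
        exact inv_mul_lt_of_lt_mul₀ (by rw [mul_one]; exact hxy)
      have hft : f (z * y⁻¹) = 0 := hfU _ hvt
      have h1 : f (y * (z * y⁻¹)) = f y + f (z * y⁻¹) := hf _ _
      rw [show y * (z * y⁻¹) = z by rw [mul_comm z y⁻¹, mul_inv_cancel_left]] at h1
      rw [h1, hft, add_zero]
    -- 1 + z = u * w
    have huw : ((u * w : Kˣ) : K) = 1 + (z : K) := by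
      push_cast [hzK, hwK, hu]; ring
    have h := hfg z (u * w) huw
    have hfuw : f (u * w) = 0 := by rw [hf, hfu, hfw, add_zero]
    rw [hfuw, zero_mul, hfzy] at h
    have hguw : g (u * w) = 0 := (mul_eq_zero.mp h).resolve_left hfy
    rw [hg, hgw, add_zero] at hguw
    exact hguw
end

section
/- Let $k$ be a field of characteristic $0$, $K$ a field extension of $k$, and let $\Delta : K^\times \to \mathbb{P}^2(\mathbb{Q})$ be a map satisfying: (i) $\Delta(c \cdot t) = \Delta(t)$ for all $c \in k^\times$ and $t \in K^\times$; (ii) for all $t, u \in K^\times$ with $\Delta(t) \neq \Delta(u)$ and all $a, b \in k$ with $a t + b u \neq 0$, the point $\Delta(a t + b u)$ lies on the projective line through $\Delta(t)$ and $\Delta(u)$; (iii) there exist $x, y \in K^\times$ with $\Delta(1) = (1:0:0)$, $\Delta(x) = (1:1:0)$, $\Delta(y) = (1:0:1)$, $\Delta(1+x) = (0:1:0)$ and $\Delta(1+y) = (0:0:1)$. Then for all integers $m, n \geq 1$, the element $(m - n) + m x$ of $K$ is nonzero and $\Delta((m-n) + m x) = (n : m : 0)$; in particular every point $(1 : r :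 0)$ with $r \in \mathbb{Q}$, $r > 0$, lies in the image of $\Delta$. -/
open Projectivization

/-- The projective line in `ℙ²(ℚ)` through two points: points whose underlying
one-dimensional subspace lies in the span of the two given points. -/
def projLine (p q : Projectivization ℚ (Fin 3 → ℚ)) :
    Set (Projectivization ℚ (Fin 3 → ℚ)) :=
  {r | r.submodule ≤ p.submodule ⊔ q.submodule}

lemma vne0 {a : ℚ} (b c : ℚ) (ha : a ≠ 0) : ![a,b,c] ≠ 0 :=
  fun h => ha (by simpa using congrFun h 0)

lemma vne1 {b : ℚ} (a c : ℚ) (hb : b ≠ 0) : ![a,b,c] ≠ 0 :=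
  fun h => hb (by simpa using congrFun h 1)

lemma vne2 {c : ℚ} (a b : ℚ) (hc : c ≠ 0) : ![a,b,c] ≠ 0 :=
  fun h => hc (by simpa using congrFun h 2)

lemma mk_mem_projLine_iff {u v w : Fin 3 → ℚ} (hu : u ≠ 0) (hv : v ≠ 0) (hw : w ≠ 0) :
    Projectivization.mk ℚ u hu ∈ projLine (Projectivization.mk ℚ v hv) (Projectivization.mk ℚ w hw) ↔
      ∃ a b : ℚ, a • v + b • w = u := by
  simp only [projLine, Set.mem_setOf_eq, submodule_mk, ← Submodule.span_union,
    Set.singleton_union, Submodule.span_singleton_le_iff_mem, Submodule.mem_span_pair]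

lemma mem_projLine_iff {v w : Fin 3 → ℚ} (hv : v ≠ 0) (hw : w ≠ 0)
    (p : Projectivization ℚ (Fin 3 → ℚ)) :
    p ∈ projLine (Projectivization.mk ℚ v hv) (Projectivization.mk ℚ w hw) ↔
      ∃ a b : ℚ, a • v + b • w = p.rep := by
  conv_lhs => rw [← p.mk_rep]
  exact mk_mem_projLine_iff p.rep_nonzero hv hw

lemma mk_ne_mk' {v w : Fin 3 → ℚ} (hv : v ≠ 0) (hw : w ≠ 0) (i j : Fin 3)
    (h : v i * w j ≠ v j * w i) :
    Projectivization.mk ℚ v hv ≠ Projectivization.mk ℚ w hw := by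
  intro hEq
  rw [mk_eq_mk_iff] at hEq
  obtain ⟨a, ha⟩ := hEq
  apply h
  have hi := congrFun ha i
  have hj := congrFun ha j
  simp only [Pi.smul_apply, Units.smul_def, smul_eq_mul] at hi hj
  rw [← hi, ← hj]; ring

lemma pin (p : Projectivization ℚ (Fin 3 → ℚ)) {z : Fin 3 → ℚ} (hz : z ≠ 0) (i0 : Fin 3)
    (hi0 : z i0 ≠ 0) (h : ∀ j, p.rep j * z i0 = p.rep i0 * z j) :
    p = Projectivization.mk ℚ z hz := by
  have ht : p.rep i0 ≠ 0 := by
    intro h0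
    apply p.rep_nonzero
    funext j
    have hj := h j
    rw [h0, zero_mul] at hj
    exact (mul_eq_zero.mp hj).resolve_right hi0
  conv_lhs => rw [← p.mk_rep]
  rw [mk_eq_mk_iff]
  refine ⟨Units.mk0 (p.rep i0 / z i0) (div_ne_zero ht hi0), ?_⟩
  funext j
  simp only [Pi.smul_apply, Units.smul_def, smul_eq_mul, Units.val_mk0]
  field_simp
  linarith [h j]

lemma solve (p : Projectivization ℚ (Fin 3 → ℚ)) {v1 w1 v2 w2 z : Fin 3 → ℚ}
    {hv1 : v1 ≠ 0} {hw1 : w1 ≠ 0} {hv2 : v2 ≠ 0} {hw2 : w2 ≠ 0} (hz : z ≠ 0)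
    (h1 : p ∈ projLine (Projectivization.mk ℚ v1 hv1) (Projectivization.mk ℚ w1 hw1))
    (h2 : p ∈ projLine (Projectivization.mk ℚ v2 hv2) (Projectivization.mk ℚ w2 hw2))
    (i0 : Fin 3) (hi0 : z i0 ≠ 0)
    (key : ∀ a b c d : ℚ, a • v1 + b • w1 = c • v2 + d • w2 →
      ∀ j, (a • v1 + b • w1) j * z i0 = (a • v1 + b • w1) i0 * z j) :
    p = Projectivization.mk ℚ z hz := by
  obtain ⟨a, b, hab⟩ := (mem_projLine_iff hv1 hw1 p).mp h1
  obtain ⟨c, d, hcd⟩ := (mem_projLine_iff hv2 hw2 p).mp h2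
  refine pin p hz i0 hi0 fun j => ?_
  have := key a b c d (hab.trans hcd.symm) j
  rw [← hab]
  exact this

lemma mk_congr {v w : Fin 3 → ℚ} (hv : v ≠ 0) (h : v = w) :
    Projectivization.mk ℚ v hv = Projectivization.mk ℚ w (h ▸ hv) := by subst h; rfl

set_option maxHeartbeats 1000000 in
/-- Key claim computation of Bogomolov-type: a map `Δ : K^× → ℙ²(ℚ)`, constant on
`k^×`-cosets, mapping projective lines to projective lines, with the prescribed values
at `1, x, y, 1+x, 1+y`, satisfies `Δ((m-n) + m·x) = (n : m : 0)` for all `m, n ≥ 1`;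
in particular every point `(1 : r : 0)` with `r ∈ ℚ`, `r > 0`, is in the image. -/
theorem stmt16 (K : Type*) [Field K] [CharZero K] (k : Subfield K)
    (Δ : Kˣ → Projectivization ℚ (Fin 3 → ℚ))
    (hscale : ∀ c ∈ k, c ≠ 0 → ∀ t s : Kˣ, (s : K) = c * (t : K) → Δ s = Δ t)
    (hline : ∀ t u : Kˣ, Δ t ≠ Δ u → ∀ a ∈ k, ∀ b ∈ k, ∀ s : Kˣ,
      (s : K) = a * (t : K) + b * (u : K) → Δ s ∈ projLine (Δ t) (Δ u))
    (x y e ex ey : Kˣ)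
    (he : (e : K) = 1) (hex : (ex : K) = 1 + (x : K)) (hey : (ey : K) = 1 + (y : K))
    (h1 : Δ e = Projectivization.mk ℚ ![1, 0, 0] (fun hc => by simpa using congrFun hc 0))
    (hx : Δ x = Projectivization.mk ℚ ![1, 1, 0] (fun hc => by simpa using congrFun hc 0))
    (hy : Δ y = Projectivization.mk ℚ ![1, 0, 1] (fun hc => by simpa using congrFun hc 0))
    (h1x : Δ ex = Projectivization.mk ℚ ![0, 1, 0] (fun hc => by simpa using congrFun hc 1))
    (h1y : Δ ey = Projectivization.mk ℚ ![0, 0, 1] (fun hc => by simpa using congrFun hc 2)) :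
    (∀ (m n : ℕ) (hm : 1 ≤ m) (hn : 1 ≤ n),
      ((m : K) - (n : K) + (m : K) * (x : K) ≠ 0) ∧
      ∀ s : Kˣ, (s : K) = (m : K) - (n : K) + (m : K) * (x : K) →
        Δ s = Projectivization.mk ℚ ![(n : ℚ), (m : ℚ), 0]
          (fun hc => by have h2 := congrFun hc 1; simp at h2; omega)) ∧
    (∀ r : ℚ, 0 < r → ∃ s : Kˣ,
      Δ s = Projectivization.mk ℚ ![1, r, 0] (fun hc => by simpa using congrFun hc 0)) := by
  have memQ : ∀ q : ℚ, (q : K) ∈ k := fun q => SubfieldClass.ratCast_mem k q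
  have hEX : Δ e ≠ Δ x := by
    rw [h1, hx]; exact mk_ne_mk' _ _ 0 1 (by norm_num)
  -- independence of 1, x, y over rational coefficients
  have indep : ∀ a b c : ℚ, (a ≠ 0 ∨ b ≠ 0 ∨ c ≠ 0) →
      ((a : ℚ) : K) + ((b : ℚ) : K) * (x : K) + ((c : ℚ) : K) * (y : K) ≠ 0 := by
    intro a b c habc h0
    by_cases hc : c = 0
    · subst hc
      push_cast at h0
      by_cases hb : b = 0
      · subst hb
        have ha : a ≠ 0 := by tauto
        apply ha
        have : ((a : ℚ) : K) = 0 := by push_cast; linear_combination h0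
        exact_mod_cast this
      · have hbK : ((b : ℚ) : K) ≠ 0 := by exact_mod_cast hb
        by_cases ha : a = 0
        · subst ha
          push_cast at h0
          have hx0 : ((b : ℚ) : K) * (x : K) = 0 := by push_cast; linear_combination h0
          rcases mul_eq_zero.mp hx0 with h | h
          · exact hbK h
          · exact x.ne_zero h
        · have heq : (x : K) = ((-a / b : ℚ) : K) * (e : K) := by
            rw [he, mul_one]
            push_cast
            rw [eq_div_iff hbK]
            linear_combination h0
          have hEq := hscale _ (memQ (-a / b))
            (by exact_mod_cast div_ne_zero (neg_ne_zero.mpr ha) hb) e x heq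
          rw [hx, h1] at hEq
          exact absurd hEq (mk_ne_mk' _ _ 1 0 (by norm_num))
    · have hcK : ((c : ℚ) : K) ≠ 0 := by exact_mod_cast hc
      by_cases hb : b = 0
      · subst hb
        push_cast at h0
        by_cases ha : a = 0
        · subst ha
          push_cast at h0
          have hy0 : ((c : ℚ) : K) * (y : K) = 0 := by push_cast; linear_combination h0
          rcases mul_eq_zero.mp hy0 with h | h
          · exact hcK h
          · exact y.ne_zero h
        · have heq : (y : K) = ((-a / c : ℚ) : K) * (e : K) := by
            rw [he, mul_one]
            push_cast
            rw [eq_div_iff hcK]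
            linear_combination h0
          have hEq := hscale _ (memQ (-a / c))
            (by exact_mod_cast div_ne_zero (neg_ne_zero.mpr ha) hc) e y heq
          rw [hy, h1] at hEq
          exact absurd hEq (mk_ne_mk' _ _ 2 0 (by norm_num [Matrix.cons_val_two]))
      · have hmem := hline e x hEX _ (memQ (-a / c)) _ (memQ (-b / c)) y (by
          rw [he, mul_one]
          push_cast
          rw [div_mul_eq_mul_div, ← add_div, eq_div_iff hcK]
          linear_combination h0)
        rw [h1, hx, hy] at hmem
        rw [mk_mem_projLine_iff] at hmem
        obtain ⟨p, q, hpq⟩ := hmem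
        have := congrFun hpq 2
        simp at this
  -- Δ(x - y) = (0 : 1 : -1)
  have nzXY : (x : K) - (y : K) ≠ 0 := by
    intro h
    exact indep 0 1 (-1) (Or.inr (Or.inl one_ne_zero)) (by push_cast; linear_combination h)
  have hXY : ∀ s : Kˣ, (s : K) = (x : K) - (y : K) →
      Δ s = Projectivization.mk ℚ ![0, 1, -1] (vne1 _ _ one_ne_zero) := by
    intro s hs
    have m1 := hline x y (by rw [hx, hy]; exact mk_ne_mk' _ _ 1 2 (by norm_num [Matrix.cons_val_two]))
      _ (memQ 1) _ (memQ (-1)) s (by push_cast; linear_combination hs)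
    have m2 := hline ex ey (by rw [h1x, h1y]; exact mk_ne_mk' _ _ 1 2 (by norm_num [Matrix.cons_val_two]))
      _ (memQ 1) _ (memQ (-1)) s (by rw [hex, hey]; push_cast; linear_combination hs)
    rw [hx, hy] at m1
    rw [h1x, h1y] at m2
    refine solve (Δ s) _ m1 m2 1 (by norm_num) ?_
    intro a b c d h j
    have e0 := congrFun h 0; have e1 := congrFun h 1; have e2 := congrFun h 2
    norm_num at e0 e1 e2
    fin_cases j <;> norm_num <;> linarith
  -- step: from C(m,1), get D(m,0) : Δ(m + m x + y) = (1 : m : 1)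
  have stepD0 : ∀ m : ℕ, 1 ≤ m →
      (∀ s : Kˣ, (s : K) = (m : K) - 1 + (m : K) * (x : K) →
        Δ s = Projectivization.mk ℚ ![1, (m : ℚ), 0] (vne0 _ _ one_ne_zero)) →
      ∀ s : Kˣ, (s : K) = (m : K) + (m : K) * (x : K) + (y : K) →
        Δ s = Projectivization.mk ℚ ![1, (m : ℚ), 1] (vne0 _ _ one_ne_zero) := by
    intro m hm hC1 s hs
    have hmQ : (m : ℚ) ≠ 0 := Nat.cast_ne_zero.mpr (by omega)
    have hmK : ((m : ℚ) : K) ≠ 0 := by exact_mod_cast hmQ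
    have nz1 : (m : K) + (m : K) * (x : K) ≠ 0 := by
      intro h; exact indep m m 0 (Or.inl hmQ) (by push_cast at h ⊢; linear_combination h)
    have ht1 : Δ (Units.mk0 _ nz1) = Δ ex :=
      hscale _ (memQ m) hmK ex _ (by simp only [Units.val_mk0]; rw [hex]; push_cast; ring)
    have nzC1 : (m : K) - 1 + (m : K) * (x : K) ≠ 0 := by
      intro h
      exact indep ((m : ℚ) - 1) m 0 (Or.inr (Or.inl hmQ)) (by push_cast at h ⊢; linear_combination h)
    have ht2 := hC1 (Units.mk0 _ nzC1) rfl
    have m1 := hline (Units.mk0 _ nz1) y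
      (by rw [ht1, h1x, hy]; exact mk_ne_mk' _ _ 1 0 (by norm_num))
      _ (memQ 1) _ (memQ 1) s
      (by simp only [Units.val_mk0]; push_cast at hs ⊢; linear_combination hs)
    have m2 := hline (Units.mk0 _ nzC1) ey
      (by rw [ht2, h1y]; exact mk_ne_mk' _ _ 0 2 (by norm_num [Matrix.cons_val_two]))
      _ (memQ 1) _ (memQ 1) s
      (by simp only [Units.val_mk0]; rw [hey]; push_cast at hs ⊢; linear_combination hs)
    rw [ht1, h1x, hy] at m1
    rw [ht2, h1y] at m2
    refine solve (Δ s) _ m1 m2 2 (by norm_num [Matrix.cons_val_two]) ?_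
    intro a b c d h j
    have e0 := congrFun h 0; have e1 := congrFun h 1; have e2 := congrFun h 2
    simp only [Pi.add_apply, Pi.smul_apply, smul_eq_mul, Matrix.cons_val_zero,
      Matrix.cons_val_one, Matrix.head_cons, Matrix.cons_val_two, Matrix.tail_cons] at e0 e1 e2
    fin_cases j <;>
      simp only [Fin.zero_eta, Fin.mk_one, Fin.reduceFinMk, Pi.add_apply, Pi.smul_apply,
        smul_eq_mul, Matrix.cons_val_zero, Matrix.cons_val_one, Matrix.head_cons,
        Matrix.cons_val_two, Matrix.tail_cons]
    linear_combination e1 - (m : ℚ) * e0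
  -- the chain C(m,1) : Δ((m-1) + m x) = (1 : m : 0), by induction on m
  have hC1 : ∀ m : ℕ, 1 ≤ m → ∀ s : Kˣ, (s : K) = (m : K) - 1 + (m : K) * (x : K) →
      Δ s = Projectivization.mk ℚ ![1, (m : ℚ), 0] (vne0 _ _ one_ne_zero) := by
    intro m
    induction m with
    | zero => exact fun h => absurd h (by norm_num)
    | succ m ih =>
      intro _
      by_cases hm : 1 ≤ m
      · -- inductive step
        intro s hs
        have hD0 := stepD0 m hm (ih hm)
        have nzD0 : (m : K) + (m : K) * (x : K) + (y : K) ≠ 0 := by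
          intro h
          exact indep m m 1 (Or.inr (Or.inr one_ne_zero)) (by push_cast at h ⊢; linear_combination h)
        have htD := hD0 (Units.mk0 _ nzD0) rfl
        have htXY := hXY (Units.mk0 _ nzXY) rfl
        have nzC1 : (m : K) - 1 + (m : K) * (x : K) ≠ 0 := by
          intro h
          exact indep ((m : ℚ) - 1) m 0
            (Or.inr (Or.inl (Nat.cast_ne_zero.mpr (Nat.one_le_iff_ne_zero.mp hm)))) (by push_cast at h ⊢; linear_combination h)
        have htC := ih hm (Units.mk0 _ nzC1) rfl
        have m1 := hline (Units.mk0 _ nzD0) (Units.mk0 _ nzXY)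
          (by rw [htD, htXY]; exact mk_ne_mk' _ _ 0 1 (by norm_num))
          _ (memQ 1) _ (memQ 1) s
          (by simp only [Units.val_mk0]; push_cast at hs ⊢; linear_combination hs)
        have m2 := hline (Units.mk0 _ nzC1) ex
          (by rw [htC, h1x]; exact mk_ne_mk' _ _ 0 1 (by norm_num))
          _ (memQ 1) _ (memQ 1) s
          (by simp only [Units.val_mk0]; rw [hex]; push_cast at hs ⊢; linear_combination hs)
        rw [htD, htXY] at m1
        rw [htC, h1x] at m2
        refine solve (Δ s) _ m1 m2 0 (by norm_num) ?_
        intro a b c d h j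
        have e0 := congrFun h 0; have e1 := congrFun h 1; have e2 := congrFun h 2
        simp only [Pi.add_apply, Pi.smul_apply, smul_eq_mul, Matrix.cons_val_zero,
          Matrix.cons_val_one, Matrix.head_cons, Matrix.cons_val_two, Matrix.tail_cons] at e0 e1 e2
        fin_cases j <;>
          simp only [Fin.zero_eta, Fin.mk_one, Fin.reduceFinMk, Pi.add_apply, Pi.smul_apply,
            smul_eq_mul, Matrix.cons_val_zero, Matrix.cons_val_one, Matrix.head_cons,
            Matrix.cons_val_two, Matrix.tail_cons] <;>
          push_cast
        · linear_combination -e2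
        · linear_combination e2
      · -- base case m = 1
        have hm0 : m = 0 := by omega
        subst hm0
        intro s hs
        have hsx : s = x := Units.ext (by push_cast at hs; norm_num at hs; exact hs)
        rw [hsx, hx]
        exact mk_congr _ (by funext i; fin_cases i <;> simp only [Fin.zero_eta, Fin.mk_one,
          Fin.reduceFinMk, Matrix.cons_val_zero, Matrix.cons_val_one, Matrix.head_cons,
          Matrix.cons_val_two, Matrix.tail_cons] <;> push_cast <;> ring)
  -- step C : from D(m,n), get C(m,n+1)
  have stepC : ∀ m n : ℕ, 1 ≤ m →
      (∀ s : Kˣ, (s : K) = (m : K) - n + (m : K) * (x : K) + (y : K) →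
        Δ s = Projectivization.mk ℚ ![(n : ℚ) + 1, (m : ℚ), 1] (vne2 _ _ one_ne_zero)) →
      ∀ s : Kˣ, (s : K) = (m : K) - (n + 1 : ℕ) + (m : K) * (x : K) →
        Δ s = Projectivization.mk ℚ ![(n : ℚ) + 1, (m : ℚ), 0] (vne0 _ _ (by positivity)) := by
    intro m n hm hD s hs
    have hn1 : ((n : ℚ) + 1) ≠ 0 := by positivity
    have nzD : (m : K) - n + (m : K) * (x : K) + (y : K) ≠ 0 := by
      intro h
      exact indep ((m : ℚ) - n) m 1 (Or.inr (Or.inr one_ne_zero)) (by push_cast at h ⊢; linear_combination h)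
    have htD := hD (Units.mk0 _ nzD) rfl
    have m1 := hline (Units.mk0 _ nzD) ey
      (by rw [htD, h1y]; exact mk_ne_mk' _ _ 0 2 (by norm_num [hn1, Matrix.cons_val_two]))
      _ (memQ 1) _ (memQ (-1)) s
      (by simp only [Units.val_mk0]; rw [hey]; push_cast at hs ⊢; linear_combination hs)
    have m2 := hline e x hEX _ (memQ ((m : ℚ) - (n + 1))) _ (memQ m) s
      (by rw [he, mul_one]; push_cast at hs ⊢; linear_combination hs)
    rw [htD, h1y] at m1
    rw [h1, hx] at m2
    refine solve (Δ s) _ m1 m2 0 (by norm_num [hn1]) ?_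
    intro a b c d h j
    have e2 := congrFun h 2
    simp only [Pi.add_apply, Pi.smul_apply, smul_eq_mul, Matrix.cons_val_zero,
      Matrix.cons_val_one, Matrix.head_cons, Matrix.cons_val_two, Matrix.tail_cons] at e2
    fin_cases j <;>
      simp only [Fin.zero_eta, Fin.mk_one, Fin.reduceFinMk, Pi.add_apply, Pi.smul_apply,
        smul_eq_mul, Matrix.cons_val_zero, Matrix.cons_val_one, Matrix.head_cons,
        Matrix.cons_val_two, Matrix.tail_cons] <;>
      push_cast
    · ring
    · linear_combination ((n : ℚ) + 1) * e2
  -- step D : from C(m,n+1) and D(m,n), get D(m,n+1)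
  have stepD : ∀ m n : ℕ, 1 ≤ m →
      (∀ s : Kˣ, (s : K) = (m : K) - (n + 1 : ℕ) + (m : K) * (x : K) →
        Δ s = Projectivization.mk ℚ ![(n : ℚ) + 1, (m : ℚ), 0] (vne0 _ _ (by positivity))) →
      (∀ s : Kˣ, (s : K) = (m : K) - n + (m : K) * (x : K) + (y : K) →
        Δ s = Projectivization.mk ℚ ![(n : ℚ) + 1, (m : ℚ), 1] (vne2 _ _ one_ne_zero)) →
      ∀ s : Kˣ, (s : K) = (m : K) - (n + 1 : ℕ) + (m : K) * (x : K) + (y : K) →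
        Δ s = Projectivization.mk ℚ ![((n + 1 : ℕ) : ℚ) + 1, (m : ℚ), 1] (vne2 _ _ one_ne_zero) := by
    intro m n hm hC hD s hs
    have hmQ : (m : ℚ) ≠ 0 := Nat.cast_ne_zero.mpr (by omega)
    have hn1 : ((n : ℚ) + 1) ≠ 0 := by positivity
    have nzC : (m : K) - (n + 1 : ℕ) + (m : K) * (x : K) ≠ 0 := by
      intro h
      exact indep ((m : ℚ) - (n + 1)) m 0 (Or.inr (Or.inl hmQ)) (by push_cast at h ⊢; linear_combination h)
    have nzD : (m : K) - n + (m : K) * (x : K) + (y : K) ≠ 0 := by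
      intro h
      exact indep ((m : ℚ) - n) m 1 (Or.inr (Or.inr one_ne_zero)) (by push_cast at h ⊢; linear_combination h)
    have htC := hC (Units.mk0 _ nzC) rfl
    have htD := hD (Units.mk0 _ nzD) rfl
    have m1 := hline (Units.mk0 _ nzC) y
      (by rw [htC, hy]; exact mk_ne_mk' _ _ 0 2 (by norm_num [hn1, Matrix.cons_val_two]))
      _ (memQ 1) _ (memQ 1) s
      (by simp only [Units.val_mk0]; push_cast at hs ⊢; linear_combination hs)
    have m2 := hline (Units.mk0 _ nzD) e
      (by rw [htD, h1]; exact mk_ne_mk' _ _ 2 0 (by norm_num [Matrix.cons_val_two]))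
      _ (memQ 1) _ (memQ (-1)) s
      (by simp only [Units.val_mk0]; rw [he, mul_one]; push_cast at hs ⊢; linear_combination hs)
    rw [htC, hy] at m1
    rw [htD, h1] at m2
    refine solve (Δ s) _ m1 m2 2 (by norm_num [Matrix.cons_val_two]) ?_
    intro a b c d h j
    have e1 := congrFun h 1
    have e2 := congrFun h 2
    simp only [Pi.add_apply, Pi.smul_apply, smul_eq_mul, Matrix.cons_val_zero,
      Matrix.cons_val_one, Matrix.head_cons, Matrix.cons_val_two, Matrix.tail_cons] at e1 e2
    have hac : a = c := by
      have h' : a * (m : ℚ) = c * (m : ℚ) := by linear_combination e1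
      exact mul_right_cancel₀ hmQ h'
    fin_cases j <;>
      simp only [Fin.zero_eta, Fin.mk_one, Fin.reduceFinMk, Pi.add_apply, Pi.smul_apply,
        smul_eq_mul, Matrix.cons_val_zero, Matrix.cons_val_one, Matrix.head_cons,
        Matrix.cons_val_two, Matrix.tail_cons] <;>
      push_cast
    · linear_combination ((n : ℚ) + 1) * hac - ((n : ℚ) + 1) * e2
    · linear_combination (m : ℚ) * hac - (m : ℚ) * e2
  -- the main joint induction over n
  have main : ∀ m : ℕ, 1 ≤ m → ∀ n : ℕ,
      (∀ s : Kˣ, (s : K) = (m : K) - n + (m : K) * (x : K) + (y : K) →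
        Δ s = Projectivization.mk ℚ ![(n : ℚ) + 1, (m : ℚ), 1] (vne2 _ _ one_ne_zero)) ∧
      (∀ s : Kˣ, (s : K) = (m : K) - (n + 1 : ℕ) + (m : K) * (x : K) →
        Δ s = Projectivization.mk ℚ ![(n : ℚ) + 1, (m : ℚ), 0] (vne0 _ _ (by positivity))) := by
    intro m hm n
    induction n with
    | zero =>
      constructor
      · intro s hs
        have := stepD0 m hm (hC1 m hm) s (by push_cast at hs ⊢; linear_combination hs)
        rw [this]
        exact mk_congr _ (by funext i; fin_cases i <;> simp only [Fin.zero_eta, Fin.mk_one,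
          Fin.reduceFinMk, Matrix.cons_val_zero, Matrix.cons_val_one, Matrix.head_cons,
          Matrix.cons_val_two, Matrix.tail_cons] <;> push_cast <;> ring)
      · intro s hs
        have := hC1 m hm s (by push_cast at hs ⊢; linear_combination hs)
        rw [this]
        exact mk_congr _ (by funext i; fin_cases i <;> simp only [Fin.zero_eta, Fin.mk_one,
          Fin.reduceFinMk, Matrix.cons_val_zero, Matrix.cons_val_one, Matrix.head_cons,
          Matrix.cons_val_two, Matrix.tail_cons] <;> push_cast <;> ring)
    | succ n ih =>
      have hDn1 := stepD m n hm ih.2 ih.1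
      exact ⟨hDn1, stepC m (n + 1) hm hDn1⟩
  -- first bullet
  have part1 : ∀ (m n : ℕ) (hm : 1 ≤ m) (hn : 1 ≤ n),
      ((m : K) - (n : K) + (m : K) * (x : K) ≠ 0) ∧
      ∀ s : Kˣ, (s : K) = (m : K) - (n : K) + (m : K) * (x : K) →
        Δ s = Projectivization.mk ℚ ![(n : ℚ), (m : ℚ), 0]
          (fun hc => by have h2 := congrFun hc 1; simp at h2; omega) := by
    intro m n hm hn
    obtain ⟨n', rfl⟩ : ∃ n', n = n' + 1 := ⟨n - 1, by omega⟩
    constructor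
    · intro h
      exact indep ((m : ℚ) - (n' + 1)) m 0
        (Or.inr (Or.inl (Nat.cast_ne_zero.mpr (Nat.one_le_iff_ne_zero.mp hm)))) (by push_cast at h ⊢; linear_combination h)
    · intro s hs
      have := (main m hm n').2 s hs
      rw [this]
      exact mk_congr _ (by funext i; fin_cases i <;> simp only [Fin.zero_eta, Fin.mk_one,
          Fin.reduceFinMk, Matrix.cons_val_zero, Matrix.cons_val_one, Matrix.head_cons,
          Matrix.cons_val_two, Matrix.tail_cons] <;> push_cast <;> ring)
  refine ⟨part1, ?_⟩
  intro r hr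
  have hnum : 0 < r.num := Rat.num_pos.mpr hr
  have hm : 1 ≤ r.num.toNat := by
    have h := hnum
    generalize r.num = N at h ⊢
    omega
  have hn : 1 ≤ r.den := r.den_pos
  obtain ⟨hnz, hval⟩ := part1 r.num.toNat r.den hm hn
  refine ⟨Units.mk0 _ hnz, ?_⟩
  rw [hval _ rfl, mk_eq_mk_iff]
  have hdQ : ((r.den : ℕ) : ℚ) ≠ 0 := by positivity
  refine ⟨Units.mk0 (r.den : ℚ) hdQ, ?_⟩
  have hden : (r.den : ℚ) * r = (r.num : ℚ) := by
    have h := Rat.num_div_den r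
    rw [div_eq_iff (by exact_mod_cast r.den_ne_zero)] at h
    rw [mul_comm]
    exact h.symm
  have hmq : ((r.num.toNat : ℕ) : ℚ) = (r.num : ℚ) := by
    exact_mod_cast Int.toNat_of_nonneg hnum.le
  funext i
  simp only [Pi.smul_apply, Units.smul_def, smul_eq_mul, Units.val_mk0]
  fin_cases i
  · simp
  · simp only [Fin.mk_one, Matrix.cons_val_one, Matrix.head_cons, Matrix.cons_val_zero]
    rw [hden]
    exact hmq.symm
  · simp
end
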